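/- There exist infinitely many quadruples (x_1, x_2, x_3, x_4) ∈ ℚ⁴ satisfying x_3² − 2x_2² + x_1² = 2 and x_4² − 2x_3² + x_2² = 2 which are non-trivial, i.e., for which there is no t ∈ ℚ with x_i² = (t+i)² for all i ∈ {1,2,3,4}. In other words, the Büchi problem of length 4 has infinitely many non-trivial rational solutions. -/

import Mathlib

/-- The Büchi problem of length `4` has infinitely many non-trivial rational
solutions: there are infinitely many `(x₁, x₂, x₃, x₄) ∈ ℚ⁴` with
`x₃² − 2x₂² + x₁² = 2` and `x₄² − 2x₃² + x₂² = 2` such that there is no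
`t ∈ ℚ` with `x_i² = (t + i)²` for all `i`. -/
theorem buchi_length_four_nontrivial_infinite :
    {x : Fin 4 → ℚ |
      (x 2 ^ 2 - 2 * x 1 ^ 2 + x 0 ^ 2 = 2 ∧
       x 3 ^ 2 - 2 * x 2 ^ 2 + x 1 ^ 2 = 2) ∧
      ¬ ∃ t : ℚ, ∀ i : Fin 4, x i ^ 2 = (t + ((i : ℕ) + 1 : ℚ)) ^ 2}.Infinite := by
  apply Set.infinite_of_injective_forall_mem
    (f := fun n : ℕ =>
      (![(((n : ℚ) + 3) ^ 2 + 2) / (2 * ((n : ℚ) + 3)),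
         (((n : ℚ) + 3) ^ 2 - 2) / (2 * ((n : ℚ) + 3)),
         (((n : ℚ) + 3) ^ 2 - 2) / (2 * ((n : ℚ) + 3)),
         (((n : ℚ) + 3) ^ 2 + 2) / (2 * ((n : ℚ) + 3))] : Fin 4 → ℚ))
  · intro m n hmn
    have h := congrFun hmn 0
    simp only [Matrix.cons_val_zero] at h
    have hm : (0:ℚ) < (m:ℚ) + 3 := by positivity
    have hn : (0:ℚ) < (n:ℚ) + 3 := by positivity
    have hm3 : (3:ℚ) ≤ (m:ℚ) + 3 := by
      have : (0:ℚ) ≤ (m:ℚ) := Nat.cast_nonneg m; linarith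
    have hn3 : (3:ℚ) ≤ (n:ℚ) + 3 := by
      have : (0:ℚ) ≤ (n:ℚ) := Nat.cast_nonneg n; linarith
    have h' : (((m:ℚ)+3)^2 + 2) * (2 * ((n:ℚ)+3)) = (((n:ℚ)+3)^2 + 2) * (2 * ((m:ℚ)+3)) := by
      field_simp at h
      linarith [h]
    have key : (((m:ℚ)+3) - ((n:ℚ)+3)) * (((m:ℚ)+3) * ((n:ℚ)+3) - 2) = 0 := by
      linear_combination h'/2
    have hpos : (0:ℚ) < ((m:ℚ)+3) * ((n:ℚ)+3) - 2 := by nlinarith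
    have : (m:ℚ) = (n:ℚ) := by
      rcases mul_eq_zero.mp key with h0 | h0
      · linarith
      · linarith
    exact_mod_cast this
  · intro n
    set a : ℚ := (n : ℚ) + 3 with ha
    have hapos : (0:ℚ) < a := by positivity
    have ha0 : a ≠ 0 := ne_of_gt hapos
    have ha3 : (3:ℚ) ≤ a := by
      have h0 : (0:ℚ) ≤ (n:ℚ) := Nat.cast_nonneg n
      rw [ha]; linarith
    refine ⟨⟨?_, ?_⟩, ?_⟩
    · simp only [Matrix.cons_val_zero, Matrix.cons_val_one, Matrix.head_cons,
        Matrix.cons_val_two, Matrix.tail_cons]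
      field_simp
      ring
    · simp only [Matrix.cons_val_one, Matrix.head_cons, Matrix.cons_val_two,
        Matrix.tail_cons, Matrix.cons_val_three, Matrix.head_fin_const, Matrix.cons_val_zero]
      field_simp
      ring
    · rintro ⟨t, ht⟩
      have h1 := ht 1
      have h2 := ht 2
      simp only [Matrix.cons_val_one, Matrix.head_cons, Matrix.cons_val_two,
        Matrix.tail_cons, Fin.isValue] at h1 h2
      norm_num at h1 h2
      have hteq : t = -5/2 := by nlinarith [h1, h2]
      rw [hteq] at h1
      have h3 : ((a^2 - 2) / (2*a))^2 = 1/4 := by rw [h1]; norm_num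
      have h4 : (a^2 - 2)^2 = a^2 := by
        field_simp at h3
        nlinarith [h3]
      have ha9 : (9:ℚ) ≤ a^2 := by nlinarith
      nlinarith [h4, ha9, mul_le_mul_of_nonneg_left ha9 (by positivity : (0:ℚ) ≤ a^2)]
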